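/- Let Γ = {G_i : i ∈ I} be a non-empty family of T1 paratopological groups each of which has a suitable set. Then the product ∏_{i∈I} G_i has a suitable set contained in the σ-product (the subgroup of elements with finitely many non-identity coordinates). -/

import Mathlib

private lemma closure_diff_one {G : Type*} [Group G] (S : Set G) :
    Subgroup.closure (S \ {1}) = Subgroup.closure S := by
  refine le_antisymm (Subgroup.closure_mono Set.diff_subset) ((Subgroup.closure_le _).2 ?_)
  intro x hx
  by_cases h : x = 1
  · subst h; exact (Subgroup.closure _).one_mem
  · exact Subgroup.subset_closure ⟨hx, h⟩

private lemma exists_isOpen_inter_eq {X : Type*} [TopologicalSpace X] {S : Set X}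
    (_h : DiscreteTopology S) {s : X} (hs : s ∈ S) :
    ∃ U : Set X, IsOpen U ∧ U ∩ S = {s} := by
  have h : IsOpen ({⟨s, hs⟩} : Set S) := isOpen_discrete _
  rw [isOpen_induced_iff] at h
  obtain ⟨U, hU, hUS⟩ := h
  refine ⟨U, hU, Set.Subset.antisymm ?_ ?_⟩
  · rintro t ⟨htU, htS⟩
    have : (⟨t, htS⟩ : S) ∈ Subtype.val ⁻¹' U := htU
    rw [hUS] at this
    simpa using congrArg Subtype.val this
  · intro t ht
    rw [Set.mem_singleton_iff] at ht; subst ht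
    have : (⟨t, hs⟩ : S) ∈ Subtype.val ⁻¹' U := by rw [hUS]; rfl
    exact ⟨this, hs⟩

def IsSuitable {G : Type*} [Group G] [TopologicalSpace G] (S : Set G) : Prop :=
  DiscreteTopology S ∧ IsClosed (S ∪ {1}) ∧ Dense (Subgroup.closure S : Set G)

theorem stmt19 {ι : Type*} [Nonempty ι] (G : ι → Type*)
    [∀ i, Group (G i)] [∀ i, TopologicalSpace (G i)]
    [∀ i, ContinuousMul (G i)] [∀ i, T1Space (G i)]
    (hG : ∀ i, ∃ S : Set (G i), IsSuitable S) :
    ∃ S : Set (∀ i, G i), IsSuitable S ∧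
      S ⊆ {x : ∀ i, G i | {i : ι | x i ≠ 1}.Finite} := by
  classical
  choose S₀ hS₀ using hG
  set T : ∀ i, Set (G i) := fun i => S₀ i \ {1} with hT
  set S : Set (∀ i, G i) := ⋃ i, Pi.mulSingle i '' T i with hS
  -- every element of S ∪ {1} has all coordinates in S₀ i ∪ {1}
  have hmem : ∀ y ∈ S ∪ {1}, ∀ i, y i ∈ S₀ i ∪ {1} := by
    rintro y (hy | hy) i
    · obtain ⟨j, hj⟩ := Set.mem_iUnion.1 hy
      obtain ⟨t, ht, rfl⟩ := hj
      by_cases hij : i = j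
      · subst hij; simp only [Pi.mulSingle_eq_same]; exact Or.inl ht.1
      · right; simp [Pi.mulSingle_eq_of_ne hij]
    · right; rw [Set.mem_singleton_iff] at hy; subst hy; rfl
  -- every element of S ∪ {1} has at most one nontrivial coordinate
  have hsupp : ∀ y ∈ S ∪ {1}, ∀ i j, y i ≠ 1 → y j ≠ 1 → i = j := by
    rintro y (hy | hy) i j hi hj
    · obtain ⟨k, hk⟩ := Set.mem_iUnion.1 hy
      obtain ⟨t, _ht, rfl⟩ := hk
      by_cases hik : i = k
      · by_cases hjk : j = k
        · rw [hik, hjk]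
        · exact absurd (Pi.mulSingle_eq_of_ne hjk t) hj
      · exact absurd (Pi.mulSingle_eq_of_ne hik t) hi
    · rw [Set.mem_singleton_iff] at hy; subst hy; exact absurd rfl hi
  have hsubS : ∀ i, Pi.mulSingle i '' T i ⊆ S := fun i =>
    Set.subset_iUnion (fun i => Pi.mulSingle i '' T i) i
  refine ⟨S, ⟨?_, ?_, ?_⟩, ?_⟩
  · -- discreteness
    rw [discreteTopology_iff_isOpen_singleton]
    rintro ⟨x, hx⟩
    obtain ⟨i, hi⟩ := Set.mem_iUnion.1 hx
    obtain ⟨t, ht, htx⟩ := hi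
    obtain ⟨V, hV, hVS⟩ := exists_isOpen_inter_eq (hS₀ i).1 ht.1
    set U : Set (∀ i, G i) := (fun y => y i) ⁻¹' (V ∩ {1}ᶜ) with hU
    have hUopen : IsOpen U :=
      (hV.inter isClosed_singleton.isOpen_compl).preimage (continuous_apply i)
    have hxU : x ∈ U := by
      rw [← htx]
      refine ⟨?_, ?_⟩ <;> simp only [Set.mem_preimage, Pi.mulSingle_eq_same]
      · have : t ∈ V ∩ S₀ i := by rw [hVS]; rfl
        exact this.1
      · exact ht.2
    have hUS : ∀ y ∈ S, y ∈ U → y = x := by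
      intro y hy hyU
      obtain ⟨j, hj⟩ := Set.mem_iUnion.1 hy
      obtain ⟨u, hu, huy⟩ := hj
      have hij : i = j := by
        by_contra hij
        have : y i = 1 := by rw [← huy]; exact Pi.mulSingle_eq_of_ne hij u
        exact hyU.2 this
      subst hij
      have hyi : y i = u := by rw [← huy]; exact Pi.mulSingle_eq_same i u
      have : u ∈ V ∩ S₀ i := ⟨by rw [← hyi]; exact hyU.1, hu.1⟩
      rw [hVS, Set.mem_singleton_iff] at this
      subst this
      rw [← huy, htx]
    have : ({⟨x, hx⟩} : Set S) = Subtype.val ⁻¹' U := by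
      ext ⟨y, hy⟩
      simp only [Set.mem_singleton_iff, Set.mem_preimage, Subtype.mk.injEq]
      constructor
      · rintro rfl; exact hxU
      · intro h; exact hUS y hy h
    rw [this]
    exact hUopen.preimage continuous_subtype_val
  · -- closedness of S ∪ {1}
    rw [← isOpen_compl_iff, isOpen_iff_forall_mem_open]
    intro x hx
    by_cases h2 : ∃ i j, i ≠ j ∧ x i ≠ 1 ∧ x j ≠ 1
    · obtain ⟨i, j, hij, hi, hj⟩ := h2
      refine ⟨(fun y => y i) ⁻¹' {1}ᶜ ∩ (fun y => y j) ⁻¹' {1}ᶜ, ?_, ?_, hi, hj⟩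
      · intro y hy hyC
        exact hij (hsupp y hyC i j hy.1 hy.2)
      · exact (isClosed_singleton.isOpen_compl.preimage (continuous_apply i)).inter
          (isClosed_singleton.isOpen_compl.preimage (continuous_apply j))
    · push_neg at h2
      have hxne : x ≠ 1 := fun h => hx (Or.inr (by rw [h]; rfl))
      have : ∃ i, x i ≠ 1 := by
        by_contra h
        push_neg at h
        exact hxne (funext fun i => h i)
      obtain ⟨i, hi⟩ := this
      have hxi : x i ∉ S₀ i ∪ {1} := by
        rintro (h | h)
        · apply hx
          left
          apply hsubS i
          refine ⟨x i, ⟨h, hi⟩, ?_⟩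
          funext k
          by_cases hk : k = i
          · subst hk; exact Pi.mulSingle_eq_same k (x k)
          · rw [Pi.mulSingle_eq_of_ne hk]
            by_contra hne
            exact hi (h2 k i hk (fun h' => hne h'.symm))
        · exact hi h
      refine ⟨(fun y => y i) ⁻¹' (S₀ i ∪ {1})ᶜ, ?_, ?_, hxi⟩
      · intro y hy hyC
        exact hy (hmem y hyC i)
      · exact ((hS₀ i).2.1.isOpen_compl).preimage (continuous_apply i)
  · -- density
    have key : ∀ (F : Finset ι) (y : ∀ i, G i), (∀ i, i ∉ F → y i = 1) →
        (∀ i, y i ∈ Subgroup.closure (S₀ i)) → y ∈ Subgroup.closure S := by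
      intro F
      induction F using Finset.induction_on with
      | empty =>
        intro y h1 _
        have : y = 1 := funext fun i => h1 i (Finset.notMem_empty i)
        rw [this]; exact (Subgroup.closure S).one_mem
      | @insert j F' hj IH =>
        intro y h1 h2
        have hy : y = Pi.mulSingle j (y j) * Function.update y j 1 := by
          funext k
          by_cases hk : k = j
          · subst hk; simp
          · simp [Pi.mulSingle_eq_of_ne hk, Function.update_of_ne hk]
        rw [hy]
        refine mul_mem ?_ (IH (Function.update y j 1) ?_ ?_)
        · have hle : (Subgroup.closure (T j)).map (MonoidHom.mulSingle G j) ≤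
              Subgroup.closure S := by
            rw [MonoidHom.map_closure]
            refine Subgroup.closure_mono (le_trans ?_ (hsubS j))
            intro z hz
            obtain ⟨t, ht, rfl⟩ := hz
            exact ⟨t, ht, rfl⟩
          apply hle
          refine ⟨y j, ?_, rfl⟩
          rw [hT, closure_diff_one]
          exact h2 j
        · intro i hi
          by_cases hij : i = j
          · subst hij; simp
          · rw [Function.update_of_ne hij]
            exact h1 i (by simp [hij, hi])
        · intro i
          by_cases hij : i = j
          · subst hij
            rw [Function.update_self]
            exact (Subgroup.closure _).one_mem
          · rw [Function.update_of_ne hij]; exact h2 i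
    rw [dense_iff_inter_open]
    intro U hU ⟨x, hxU⟩
    obtain ⟨I, u, hu, hsub⟩ := isOpen_pi_iff.1 hU x hxU
    have : ∀ a, ∃ g : G a, g ∈ Subgroup.closure (S₀ a) ∧ (a ∈ I → g ∈ u a) ∧
        (a ∉ I → g = 1) := by
      intro a
      by_cases ha : a ∈ I
      · obtain ⟨g, hg1, hg2⟩ := (hS₀ a).2.2.inter_open_nonempty (u a) (hu a ha).1
          ⟨x a, (hu a ha).2⟩
        exact ⟨g, hg2, fun _ => hg1, fun h => absurd ha h⟩
      · exact ⟨1, (Subgroup.closure _).one_mem, fun h => absurd h ha, fun _ => rfl⟩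
    choose y hy1 hy2 hy3 using this
    refine ⟨y, hsub fun a ha => hy2 a ha, key I y hy3 hy1⟩
  · -- contained in σ-product
    intro x hx
    obtain ⟨i, hi⟩ := Set.mem_iUnion.1 hx
    obtain ⟨t, _ht, rfl⟩ := hi
    refine Set.Finite.subset (Set.finite_singleton i) ?_
    intro j hj
    by_contra hji
    exact hj (Pi.mulSingle_eq_of_ne (fun h => hji h) t)
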